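/- Cycle-CTL* is not invariant under (ordinary) bisimulation: there exist Kripke structures K_1 and K_2, a bisimulation B ⊆ W_1 × W_2 between them, and a Cycle-CTL* state formula (namely E^cycle ⊤) such that K_1 ⊨ E^cycle ⊤ and K_2 ⊭ E^cycle ⊤. Witnesses: K_1 the one-world structure with a self-loop and K_2 the structure with worlds ℕ, initial world 0, transitions {(n, n+1) : n ∈ ℕ}, with equal constant labelings, are bisimilar via the total relation. -/
import Mathlib


namespace CycleCTL

universe u v

/-- A Kripke structure over a set `AP` of atomic propositions. -/
structure Kripke (AP : Type) : Type (u + 1) where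
  World : Type u
  init : World
  R : World → World → Prop
  label : World → Set AP
  serial : ∀ w, ∃ v, R w v

variable {AP : Type}

/-- An (infinite) path of a Kripke structure. -/
def IsPath (K : Kripke.{u} AP) (π : ℕ → K.World) : Prop :=
  ∀ i, K.R (π i) (π (i + 1))

/-- A cycle: a path visiting its first world infinitely often. -/
def IsCycle (K : Kripke.{u} AP) (π : ℕ → K.World) : Prop :=
  IsPath K π ∧ ∀ i, ∃ j, i < j ∧ π j = π 0

mutual
  /-- State formulas of Cycle-CTL*. -/
  inductive StateForm (AP : Type) : Type where
    | atom : AP → StateForm AP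
    | not  : StateForm AP → StateForm AP
    | and  : StateForm AP → StateForm AP → StateForm AP
    | or   : StateForm AP → StateForm AP → StateForm AP
    | E    : PathForm AP → StateForm AP
    | A    : PathForm AP → StateForm AP
    | Ec   : PathForm AP → StateForm AP
    | Ac   : PathForm AP → StateForm AP
  /-- Path formulas of Cycle-CTL*. -/
  inductive PathForm (AP : Type) : Type where
    | state : StateForm AP → PathForm AP
    | not   : PathForm AP → PathForm AP
    | and   : PathForm AP → PathForm AP → PathForm AP
    | or    : PathForm AP → PathForm AP → PathForm AP
    | next  : PathForm AP → PathForm AP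
    | untl  : PathForm AP → PathForm AP → PathForm AP
end

mutual
  /-- Satisfaction of a state formula at a world. -/
  def SatS (K : Kripke.{u} AP) : K.World → StateForm AP → Prop
    | w, .atom p => p ∈ K.label w
    | w, .not φ => ¬ SatS K w φ
    | w, .and φ₁ φ₂ => SatS K w φ₁ ∧ SatS K w φ₂
    | w, .or φ₁ φ₂ => SatS K w φ₁ ∨ SatS K w φ₂
    | w, .E ψ => ∃ π, IsPath K π ∧ π 0 = w ∧ SatP K π 0 ψ
    | w, .A ψ => ∀ π, IsPath K π → π 0 = w → SatP K π 0 ψ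
    | w, .Ec ψ => ∃ π, IsCycle K π ∧ π 0 = w ∧ SatP K π 0 ψ
    | w, .Ac ψ => ∀ π, IsCycle K π → π 0 = w → SatP K π 0 ψ
  /-- Satisfaction of a path formula on a path at a position. -/
  def SatP (K : Kripke.{u} AP) : (ℕ → K.World) → ℕ → PathForm AP → Prop
    | π, i, .state φ => SatS K (π i) φ
    | π, i, .not ψ => ¬ SatP K π i ψ
    | π, i, .and ψ₁ ψ₂ => SatP K π i ψ₁ ∧ SatP K π i ψ₂
    | π, i, .or ψ₁ ψ₂ => SatP K π i ψ₁ ∨ SatP K π i ψ₂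
    | π, i, .next ψ => SatP K π (i + 1) ψ
    | π, i, .untl ψ₁ ψ₂ => ∃ k, SatP K π (i + k) ψ₂ ∧ ∀ j < k, SatP K π (i + j) ψ₁
end

/-- `K ⊨ φ` : satisfaction at the initial world. -/
def Sat (K : Kripke.{u} AP) (φ : StateForm AP) : Prop := SatS K K.init φ

/-- `⊤` as a path formula, abbreviating `p ∨ ¬p`. -/
def topP (p : AP) : PathForm AP := .or (.state (.atom p)) (.not (.state (.atom p)))

/-- `F ψ` abbreviates `⊤ U ψ`. -/
def FP (p : AP) (ψ : PathForm AP) : PathForm AP := .untl (topP p) ψ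

/-- `G ψ` abbreviates `¬(⊤ U ¬ψ)`. -/
def GP (p : AP) (ψ : PathForm AP) : PathForm AP := .not (FP p (.not ψ))


/-- An (ordinary) bisimulation between two Kripke structures. -/
def IsBisim (K₁ : Kripke.{u} AP) (K₂ : Kripke.{v} AP)
    (B : K₁.World → K₂.World → Prop) : Prop :=
  B K₁.init K₂.init ∧
  ∀ w₁ w₂, B w₁ w₂ →
    (K₁.label w₁ = K₂.label w₂) ∧
    (∀ v₁, K₁.R w₁ v₁ → ∃ v₂, K₂.R w₂ v₂ ∧ B v₁ v₂) ∧
    (∀ v₂, K₂.R w₂ v₂ → ∃ v₁, K₁.R w₁ v₁ ∧ B v₁ v₂)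

/-- The one-world Kripke structure whose only transition is a self-loop. -/
def loopK (AP : Type) (S : Set AP) : Kripke.{0} AP where
  World := Unit
  init := ()
  R := fun _ _ => True
  label := fun _ => S
  serial := fun _ => ⟨(), trivial⟩

/-- The Kripke structure with worlds `ℕ`, initial world `0`, transitions `n → n+1`. -/
def chainK (AP : Type) (L : ℕ → Set AP) : Kripke.{0} AP where
  World := ℕ
  init := 0
  R := fun n m => m = n + 1
  label := L
  serial := fun n => ⟨n + 1, rfl⟩

lemma chain_no_cycle {AP : Type} (L : ℕ → Set AP) (π : ℕ → ℕ) :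
    ¬ IsCycle (chainK AP L) π := by
  rintro ⟨hpath, hcyc⟩
  have hmono : ∀ i, π i = π 0 + i := by
    intro i
    induction i with
    | zero => rfl
    | succ n ih => have := hpath n; simp only [chainK] at this; omega
  obtain ⟨j, hj, hj0⟩ := hcyc 0
  have h2 : π j = (π 0 : ℕ) := hj0
  rw [hmono j] at h2
  omega

/-- Cycle-CTL* is not invariant under ordinary bisimulation: the self-loop
structure and the infinite chain (with equal constant labelings) are bisimilar via the total
relation, yet `E^cycle ⊤` holds in the former and fails in the latter. -/
theorem stmt5 {AP : Type} (p : AP) (S : Set AP) :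
    IsBisim (loopK AP S) (chainK AP (fun _ => S)) (fun _ _ => True) ∧
    Sat (loopK AP S) (.Ec (topP p)) ∧
    ¬ Sat (chainK AP (fun _ => S)) (.Ec (topP p)) := by
  refine ⟨⟨trivial, fun w₁ w₂ _ => ⟨rfl, fun v₁ _ => (chainK AP (fun _ => S)).serial w₂ |>.elim fun v₂ h => ⟨v₂, h, trivial⟩,
      fun v₂ _ => ⟨(), trivial, trivial⟩⟩⟩, ?_, ?_⟩
  · refine ⟨fun _ => (), ⟨fun _ => trivial, fun i => ⟨i + 1, Nat.lt_succ_self i, rfl⟩⟩, rfl, ?_⟩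
    by_cases h : p ∈ S
    · exact Or.inl h
    · exact Or.inr h
  · rintro ⟨π, hcyc, h0, -⟩
    exact chain_no_cycle (fun _ => S) π hcyc


end CycleCTL
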